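/- Let k ≥ 6 be an integer and suppose K_N has a red-blue edge coloring with no red copy of C_{2k+1}. Let {W_1, W_2, W_3} be a partition of the vertex set of K_N and let X_i ⊆ W_i for i ∈ {1,2,3} be such that each (W_i, X_i) is a red hedgehog, with |X_1| ≥ k+1, |X_2| ≥ k and |X_3| ≥ 1. Then there do not exist two vertex-disjoint red paths, each having one endpoint in W_1, the other endpoint in W_2, and all internal vertices outside W_1 ∪ W_2. -/

import Mathlib

/-- `G` contains a cycle of length `n` (a copy of `C_n`). -/
def HasNCycle {V : Type*} (G : SimpleGraph V) (n : ℕ) : Prop :=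
  ∃ (v : V) (c : G.Walk v v), c.IsCycle ∧ c.length = n

/-- `(W, X)` is a hedgehog in `G`: `X ⊆ W`, `X` induces a complete subgraph,
and every vertex of `W \ X` is adjacent to every vertex of `X`. -/
def IsHedgehog {V : Type*} (G : SimpleGraph V) (W X : Finset V) : Prop :=
  X ⊆ W ∧ (∀ x ∈ X, ∀ y ∈ X, x ≠ y → G.Adj x y) ∧
    (∀ v ∈ W, v ∉ X → ∀ x ∈ X, G.Adj v x)

open List

section Aux

set_option linter.unusedSectionVars false

variable {V : Type} [DecidableEq V] {G : SimpleGraph V}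

lemma mem_of_getLast?' {l : List V} {x : V} (h : l.getLast? = some x) : x ∈ l := by
  obtain ⟨h', hx⟩ := List.mem_getLast?_eq_getLast (l := l) (x := x) (by simp [h])
  exact hx ▸ List.getLast_mem h'

/-- Every walk's edges are the consecutive pairs of its support. -/

lemma walk_edges_eq {a b : V} (w : G.Walk a b) :
    w.edges = w.support.zipWith (fun x y => s(x, y)) w.support.tail := by
  induction w with
  | nil => simp
  | cons h p ih =>
      rw [SimpleGraph.Walk.edges_cons, SimpleGraph.Walk.support_cons, ih]
      rw [p.support_eq_cons]
      simp only [List.tail_cons, List.zipWith_cons_cons]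

lemma mem_zipWith_sym2 {l : List V} {e : Sym2 V}
    (he : e ∈ l.zipWith (fun x y => s(x, y)) l.tail) :
    ∃ l₁ x y l₂, l = l₁ ++ x :: y :: l₂ ∧ e = s(x, y) := by
  induction l with
  | nil => simp at he
  | cons a t ih =>
      cases t with
      | nil => simp at he
      | cons b r =>
          simp only [List.tail_cons, List.zipWith_cons_cons, List.mem_cons] at he
          rcases he with he | he
          · exact ⟨[], a, b, r, by simp, he⟩
          · obtain ⟨l₁, x, y, l₂, h1, h2⟩ := ih (by simpa using he)
            exact ⟨a :: l₁, x, y, l₂, by simp [h1], h2⟩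

lemma exists_walk_support (m : List V) :
    ∀ (a : V) (hm : m ≠ []), List.Chain G.Adj a m →
    ∃ w : G.Walk a (m.getLast hm), w.support = a :: m := by
  induction m with
  | nil => intro a h; exact absurd rfl h
  | cons b m' ih =>
      intro a hm hch
      simp only [List.Chain, List.isChain_cons_cons] at hch
      cases m' with
      | nil => exact ⟨SimpleGraph.Walk.cons hch.1 SimpleGraph.Walk.nil, by simp⟩
      | cons c m'' =>
          obtain ⟨w', hw'⟩ := ih b (by simp) hch.2
          refine ⟨(SimpleGraph.Walk.cons hch.1 w').copy rfl (by simp [List.getLast_cons]), ?_⟩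
          simp [hw']

lemma closing_not_mem {a : V} {m : List V} (ham : a ∉ m) (hnd : m.Nodup)
    (h2 : 2 ≤ m.length) (hm : m ≠ []) :
    s(m.getLast hm, a) ∉ (a :: m).zipWith (fun x y => s(x, y)) (a :: m).tail := by
  intro hmem
  rw [List.tail_cons] at hmem
  obtain ⟨l₁, x, y, l₂, h1, h2'⟩ := mem_zipWith_sym2 (l := a :: m) (by simpa using hmem)
  rw [Sym2.eq_iff] at h2'
  rcases h2' with ⟨hx, hy⟩ | ⟨hx, hy⟩
  · -- getLast = x, a = y : a occurs in the tail
    cases l₁ with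
    | nil =>
        simp only [List.nil_append, List.cons.injEq] at h1
        exact ham (h1.2 ▸ (hy ▸ (List.mem_cons_self : y ∈ y :: l₂)))
    | cons c l₁' =>
        simp only [List.cons_append, List.cons.injEq] at h1
        exact ham (h1.2 ▸ (by simp [hy] : a ∈ l₁' ++ x :: y :: l₂))
  · -- getLast = y, a = x
    cases l₁ with
    | nil =>
        simp only [List.nil_append, List.cons.injEq] at h1
        have hmy : m = y :: l₂ := h1.2
        cases l₂ with
        | nil => rw [hmy] at h2; simp at h2
        | cons d l₂' =>
            have hyl : y ∈ d :: l₂' := by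
              apply mem_of_getLast?'
              have : m.getLast? = some y := by
                rw [List.getLast?_eq_getLast hm, hx]
              rw [hmy, List.getLast?_cons_cons] at this
              exact this
            rw [hmy] at hnd
            exact (List.nodup_cons.mp hnd).1 hyl
    | cons c l₁' =>
        simp only [List.cons_append, List.cons.injEq] at h1
        exact ham (h1.2 ▸ (by simp [hy] : a ∈ l₁' ++ x :: y :: l₂))

lemma hasNCycle_of_chain (a : V) (m : List V) (hm : m ≠ [])
    (hnd : (a :: m).Nodup) (hlen : 2 ≤ m.length)
    (hchain : List.Chain G.Adj a m)
    (hclose : G.Adj (m.getLast hm) a) : HasNCycle G (m.length + 1) := by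
  obtain ⟨w, hw⟩ := exists_walk_support m a hm hchain
  have hpath : w.IsPath := by rw [SimpleGraph.Walk.isPath_def, hw]; exact hnd
  have ham : a ∉ m := by
    have := List.nodup_cons.mp hnd
    exact this.1
  have hedge : s(m.getLast hm, a) ∉ w.edges := by
    rw [walk_edges_eq, hw]
    exact closing_not_mem ham (List.nodup_cons.mp hnd).2 hlen hm
  refine ⟨m.getLast hm, SimpleGraph.Walk.cons hclose w, ?_, ?_⟩
  · rw [SimpleGraph.Walk.cons_isCycle_iff]
    exact ⟨hpath, hedge⟩
  · have : w.length + 1 = m.length + 1 := by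
      have := w.length_support
      rw [hw] at this
      simpa using this.symm
    simpa [SimpleGraph.Walk.length_cons] using this

lemma hh_adj {R : SimpleGraph V} {W X : Finset V} (hh : IsHedgehog R W X)
    {v y : V} (hv : v ∈ W) (hy : y ∈ X) (hne : v ≠ y) : R.Adj v y := by
  by_cases hvX : v ∈ X
  · exact hh.2.1 v hvX y hy hne
  · exact hh.2.2 v hv hvX y hy

lemma chain'_adj_rev {l : List V} (h : List.IsChain G.Adj l) :
    List.IsChain G.Adj l.reverse :=
  List.isChain_reverse.mpr (h.imp fun _ _ hab => hab.symm)

lemma clique_chain {R : SimpleGraph V} (S : List V) (u w : V) (hS0 : S ≠ [])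
    (hnd : S.Nodup) (hS : ∀ a ∈ S, ∀ b ∈ S, a ≠ b → R.Adj a b)
    (hu : ∀ a ∈ S, R.Adj u a) (hw : ∀ a ∈ S, R.Adj a w) :
    List.IsChain R.Adj (u :: S ++ [w]) := by
  have hchS : List.IsChain R.Adj S :=
    List.Pairwise.isChain (hnd.imp_of_mem (fun ha hb hne => hS _ ha _ hb hne))
  have h1 : List.IsChain R.Adj (u :: S) := by
    rw [List.isChain_cons]
    exact ⟨fun y hy => hu y (List.mem_of_mem_head? hy), hchS⟩
  have : (u :: S) ++ [w] = u :: S ++ [w] := by simp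
  rw [← this, List.isChain_append]
  refine ⟨h1, List.isChain_singleton w, ?_⟩
  intro x hx y hy
  simp only [List.head?_cons, Option.mem_def, Option.some.injEq] at hy
  subst hy
  apply hw
  have : (u :: S).getLast? = S.getLast? := by
    cases S with
    | nil => exact absurd rfl hS0
    | cons b t => simp [List.getLast?_cons_cons]
  rw [this] at hx
  exact mem_of_getLast?' hx

lemma exists_clique_list (Y : Finset V) (s : ℕ) (hs : s ≤ Y.card) :
    ∃ S : List V, S.Nodup ∧ S.length = s ∧ ∀ v ∈ S, v ∈ Y := by
  obtain ⟨B, hBY, hBcard⟩ := Finset.exists_subset_card_eq hs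
  exact ⟨B.toList, B.nodup_toList, by simp [hBcard], fun v hv => hBY (by simpa using hv)⟩

lemma master {k N : ℕ} (hk : 6 ≤ k) {R : SimpleGraph (Fin N)}
    (hred : ¬ HasNCycle R (2 * k + 1))
    {W₁ X₁ : Finset (Fin N)} (hh1 : IsHedgehog R W₁ X₁) (hc1 : k + 1 ≤ X₁.card)
    {a₁ a₂ : Fin N} (ha₁ : a₁ ∈ W₁) (ha₂ : a₂ ∈ W₁) (hne : a₁ ≠ a₂)
    {A : List (Fin N)} (hA : A.Nodup) (hAW : ∀ v ∈ A, v ∉ W₁)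
    (hl1 : k ≤ A.length) (hl2 : A.length ≤ 2 * k - 2)
    (hch : List.IsChain R.Adj (a₁ :: A ++ [a₂])) : False := by
  set s₁ := 2 * k - 1 - A.length with hs₁
  have hs₁1 : 1 ≤ s₁ := by omega
  have hs₁2 : s₁ ≤ k - 1 := by omega
  have hYcard : s₁ ≤ (X₁ \ {a₁, a₂}).card := by
    have h2 : ({a₁, a₂} : Finset (Fin N)).card ≤ 2 := Finset.card_insert_le _ _ |>.trans (by simp)
    have := Finset.le_card_sdiff ({a₁, a₂} : Finset (Fin N)) X₁
    omega
  obtain ⟨S, hSnd, hSlen, hSY⟩ := exists_clique_list (X₁ \ {a₁, a₂}) s₁ hYcard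
  have hSY' : ∀ v ∈ S, v ∈ X₁ ∧ v ≠ a₁ ∧ v ≠ a₂ := by
    intro v hv
    have := hSY v hv
    simp only [Finset.mem_sdiff, Finset.mem_insert, Finset.mem_singleton] at this
    tauto
  have hS0 : S ≠ [] := by
    intro h; rw [h] at hSlen; simp at hSlen; omega
  have h2 : List.IsChain R.Adj (a₂ :: S ++ [a₁]) := by
    apply clique_chain S a₂ a₁ hS0 hSnd
    · intro a ha b hb hab
      exact hh1.2.1 a (hSY' a ha).1 b (hSY' b hb).1 hab
    · intro a ha
      exact hh_adj hh1 ha₂ (hSY' a ha).1 (fun h => (hSY' a ha).2.2 h.symm)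
    · intro a ha
      exact (hh_adj hh1 ha₁ (hSY' a ha).1 (fun h => (hSY' a ha).2.1 h.symm)).symm
  -- split the two chains
  have h1' : List.IsChain R.Adj ((a₁ :: A) ++ [a₂]) := by simpa using hch
  obtain ⟨hchA, -, hjun1⟩ := List.isChain_append.mp h1'
  have h2' : List.IsChain R.Adj ((a₂ :: S) ++ [a₁]) := by simpa using h2
  obtain ⟨hchS, -, hjun2⟩ := List.isChain_append.mp h2'
  set m : List (Fin N) := A ++ a₂ :: S with hm_def
  have hm : m ≠ [] := by simp [hm_def]
  have hchain' : List.IsChain R.Adj (a₁ :: m) := by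
    have : (a₁ :: m) = (a₁ :: A) ++ (a₂ :: S) := by simp [hm_def]
    rw [this, List.isChain_append]
    refine ⟨hchA, hchS, ?_⟩
    intro x hx y hy
    simp only [List.head?_cons, Option.mem_def, Option.some.injEq] at hy
    subst hy
    exact hjun1 x hx a₂ (by simp)
  have hchain : List.Chain R.Adj a₁ m := hchain'
  -- closing adjacency
  have hglast : m.getLast hm = S.getLast hS0 := by
    have h3 : m.getLast? = some (S.getLast hS0) := by
      apply List.mem_getLast?_append_of_mem_getLast?
      exact List.mem_getLast?_cons (List.getLast?_eq_getLast hS0)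
    rw [List.getLast?_eq_getLast hm] at h3
    exact Option.some.inj h3
  have hclose : R.Adj (m.getLast hm) a₁ := by
    rw [hglast]
    apply hjun2 _ _ a₁ (by simp)
    have : (a₂ :: S).getLast? = S.getLast? := by
      cases S with
      | nil => exact absurd rfl hS0
      | cons b t => simp [List.getLast?_cons_cons]
    rw [this, List.getLast?_eq_getLast hS0]
    rfl
  -- nodup
  have hX₁W : ∀ v ∈ S, v ∈ W₁ := fun v hv => hh1.1 (hSY' v hv).1
  have hnd : (a₁ :: m).Nodup := by
    rw [List.nodup_cons, hm_def]
    constructor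
    · intro h
      rcases List.mem_append.mp h with h | h
      · exact hAW a₁ h ha₁
      · rcases List.mem_cons.mp h with h | h
        · exact hne h
        · exact (hSY' a₁ h).2.1 rfl
    · rw [List.nodup_append]
      refine ⟨hA, ?_, ?_⟩
      · rw [List.nodup_cons]
        exact ⟨fun h => (hSY' a₂ h).2.2 rfl, hSnd⟩
      · intro v hvA _ hv2 rfl
        rcases List.mem_cons.mp hv2 with h | h
        · exact hAW v hvA (h ▸ ha₂)
        · exact hAW v hvA (hX₁W v h)
  have hlenm : 2 ≤ m.length := by
    simp only [hm_def, List.length_append, List.length_cons]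
    omega
  have := hasNCycle_of_chain a₁ m hm hnd hlenm hchain hclose
  apply hred
  have hml : m.length + 1 = 2 * k + 1 := by
    simp only [hm_def, List.length_append, List.length_cons, hSlen]
    omega
  rwa [hml] at this

lemma chain_split' {R : V → V → Prop} {u w : V} {L : List V}
    (h : List.IsChain R (u :: L ++ [w])) :
    List.IsChain R (u :: L) ∧ ∀ z ∈ (u :: L).getLast?, R z w := by
  have h' : List.IsChain R ((u :: L) ++ [w]) := by simpa using h
  obtain ⟨h1, -, hj⟩ := List.isChain_append.mp h'
  exact ⟨h1, fun z hz => hj z hz w (by simp)⟩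

lemma bridge {k N : ℕ} (hk : 6 ≤ k) {R : SimpleGraph (Fin N)}
    (hred : ¬ HasNCycle R (2 * k + 1))
    {W₁ W₂ X₁ X₂ : Finset (Fin N)}
    (hd12 : Disjoint W₁ W₂)
    (hh1 : IsHedgehog R W₁ X₁) (hc1 : k + 1 ≤ X₁.card)
    (hh2 : IsHedgehog R W₂ X₂) (hc2 : k ≤ X₂.card)
    {a₁ b₁ a₂ b₂ : Fin N}
    (ha₁ : a₁ ∈ W₁) (ha₂ : a₂ ∈ W₁) (hb₁ : b₁ ∈ W₂) (hb₂ : b₂ ∈ W₂)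
    (hnea : a₁ ≠ a₂) (hneb : b₁ ≠ b₂)
    {I₁ I₂ : List (Fin N)} (hnd1 : I₁.Nodup) (hnd2 : I₂.Nodup)
    (hdisj : ∀ v ∈ I₁, v ∉ I₂)
    (hW : ∀ v ∈ I₁ ++ I₂, v ∉ W₁ ∧ v ∉ W₂)
    (hlen : I₁.length + I₂.length ≤ 2 * k - 5)
    (hch₁ : List.IsChain R.Adj (a₁ :: I₁ ++ [b₁]))
    (hch₂ : List.IsChain R.Adj (b₂ :: I₂ ++ [a₂])) : False := by
  have hW1 : ∀ v ∈ I₁, v ∉ W₁ ∧ v ∉ W₂ := fun v hv => hW v (by simp [hv])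
  have hW2 : ∀ v ∈ I₂, v ∉ W₁ ∧ v ∉ W₂ := fun v hv => hW v (by simp [hv])
  set base := I₁.length + I₂.length + 2 with hbase
  set s₂ := max 1 (k - base) with hs₂
  have hs₂1 : 1 ≤ s₂ := le_max_left _ _
  have hs₂2 : s₂ ≤ k - 2 := by omega
  have hYcard : s₂ ≤ (X₂ \ {b₁, b₂}).card := by
    have h2 : ({b₁, b₂} : Finset (Fin N)).card ≤ 2 := Finset.card_insert_le _ _ |>.trans (by simp)
    have := Finset.le_card_sdiff ({b₁, b₂} : Finset (Fin N)) X₂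
    omega
  obtain ⟨S, hSnd, hSlen, hSY⟩ := exists_clique_list (X₂ \ {b₁, b₂}) s₂ hYcard
  have hSY' : ∀ v ∈ S, v ∈ X₂ ∧ v ≠ b₁ ∧ v ≠ b₂ := by
    intro v hv
    have := hSY v hv
    simp only [Finset.mem_sdiff, Finset.mem_insert, Finset.mem_singleton] at this
    tauto
  have hSW : ∀ v ∈ S, v ∈ W₂ := fun v hv => hh2.1 (hSY' v hv).1
  have hS0 : S ≠ [] := by intro h; rw [h] at hSlen; simp at hSlen; omega
  -- chain for the W₂ bridge
  have hbr : List.IsChain R.Adj (b₁ :: S ++ [b₂]) := by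
    apply clique_chain S b₁ b₂ hS0 hSnd
    · intro a ha b hb hab; exact hh2.2.1 a (hSY' a ha).1 b (hSY' b hb).1 hab
    · intro a ha; exact hh_adj hh2 hb₁ (hSY' a ha).1 (fun h => (hSY' a ha).2.1 h.symm)
    · intro a ha; exact (hh_adj hh2 hb₂ (hSY' a ha).1 (fun h => (hSY' a ha).2.2 h.symm)).symm
  set A : List (Fin N) := I₁ ++ (b₁ :: (S ++ (b₂ :: I₂))) with hA_def
  -- chain for a₁ :: A ++ [a₂]
  obtain ⟨hc1', hj1⟩ := chain_split' hch₁
  obtain ⟨hc2', hj2⟩ := chain_split' hbr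
  have hch : List.IsChain R.Adj (a₁ :: A ++ [a₂]) := by
    have hEq : a₁ :: A ++ [a₂] = (a₁ :: I₁) ++ ((b₁ :: S) ++ ((b₂ :: I₂) ++ [a₂])) := by
      simp [hA_def]
    rw [hEq]
    apply List.isChain_append.mpr
    refine ⟨hc1', ?_, ?_⟩
    · apply List.isChain_append.mpr
      refine ⟨hc2', by simpa using hch₂, ?_⟩
      intro x hx y hy
      simp only [List.cons_append, List.head?_cons, Option.mem_def, Option.some.injEq] at hy
      subst hy
      exact hj2 x hx
    · intro x hx y hy
      simp only [List.cons_append, List.head?_cons, Option.mem_def, Option.some.injEq] at hy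
      subst hy
      exact hj1 x hx
  -- nodup
  have hbS : b₁ ∉ S := fun h => (hSY' b₁ h).2.1 rfl
  have hb2S : b₂ ∉ S := fun h => (hSY' b₂ h).2.2 rfl
  have hAnd : A.Nodup := by
    rw [hA_def, List.nodup_append, List.nodup_cons, List.nodup_append, List.nodup_cons]
    refine ⟨hnd1, ⟨?_, hSnd, ⟨fun h => (hW2 b₂ h).2 hb₂, hnd2⟩, ?_⟩, ?_⟩
    · intro h
      rcases List.mem_append.mp h with h | h
      · exact hbS h
      · rcases List.mem_cons.mp h with h | h
        · exact hneb h
        · exact (hW2 b₁ h).2 hb₁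
    · intro v hvS _ hv2 rfl
      rcases List.mem_cons.mp hv2 with h | h
      · exact hb2S (h ▸ hvS)
      · exact (hW2 v h).2 (hSW v hvS)
    · intro v hv1 _ hv2 rfl
      rcases List.mem_cons.mp hv2 with h | h
      · exact (hW1 v hv1).2 (h ▸ hb₁)
      · rcases List.mem_append.mp h with h | h
        · exact (hW1 v hv1).2 (hSW v h)
        · rcases List.mem_cons.mp h with h | h
          · exact (hW1 v hv1).2 (h ▸ hb₂)
          · exact hdisj v hv1 h
  have hAW : ∀ v ∈ A, v ∉ W₁ := by
    intro v hv
    have hd := Finset.disjoint_left.mp hd12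
    rw [hA_def] at hv
    rcases List.mem_append.mp hv with h | h
    · exact (hW1 v h).1
    · rcases List.mem_cons.mp h with h | h
      · exact fun hw => hd hw (h ▸ hb₁)
      · rcases List.mem_append.mp h with h | h
        · exact fun hw => hd hw (hSW v h)
        · rcases List.mem_cons.mp h with h | h
          · exact fun hw => hd hw (h ▸ hb₂)
          · exact (hW2 v h).1
  have hAlen : A.length = base + s₂ := by
    simp only [hA_def, List.length_append, List.length_cons, hSlen]
    omega
  exact master hk hred hh1 hc1 ha₁ ha₂ hnea hAnd hAW
    (by omega) (by omega) hch

lemma nodup_parts {a b : V} {M : List V} (h : (a :: M ++ [b]).Nodup) :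
    M.Nodup ∧ a ∉ M ∧ b ∉ M ∧ a ≠ b := by
  rw [List.cons_append, List.nodup_cons, List.nodup_append] at h
  obtain ⟨ha, hM, -, hdis⟩ := h
  refine ⟨hM, fun h' => ha (List.mem_append.mpr (Or.inl h')), ?_, ?_⟩
  · intro h'
    exact hdis b h' b (by simp) rfl
  · intro h'
    exact ha (List.mem_append.mpr (Or.inr (by simp [h'])))

lemma shortcut {R : SimpleGraph V} {W₃ : Finset V} {x a b : V} {M : List V}
    (hx3 : x ∈ W₃) (hxadj : ∀ v ∈ W₃, v ≠ x → R.Adj v x)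
    (hM : ∀ v ∈ M, v ∈ W₃) (hnd : (a :: M ++ [b]).Nodup)
    (hch : List.IsChain R.Adj (a :: M ++ [b])) (hlen : 2 ≤ M.length) :
    ∃ I : List V, I.Nodup ∧ 2 ≤ I.length ∧ I.length ≤ 3 ∧
      (∀ v ∈ I, v ∈ M ∨ v = x) ∧ List.IsChain R.Adj (a :: I ++ [b]) := by
  obtain ⟨Mh, Mt, rfl⟩ := List.exists_cons_of_ne_nil
    (show M ≠ [] by intro h; rw [h] at hlen; simp at hlen)
  have hMt : Mt ≠ [] := by
    intro h; rw [h] at hlen; simp at hlen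
  set Ml := (Mh :: Mt).getLast (by simp) with hMl_def
  have hMlMt : Ml ∈ Mt := by
    rw [hMl_def, List.getLast_cons hMt]
    exact List.getLast_mem hMt
  have hMhMl : Mh ≠ Ml := by
    intro h
    have := (nodup_parts hnd).1
    rw [List.nodup_cons] at this
    exact this.1 (h ▸ hMlMt)
  have hMhM : Mh ∈ Mh :: Mt := by simp
  have hMlM : Ml ∈ Mh :: Mt := List.mem_cons_of_mem _ hMlMt
  have hAdjaMh : R.Adj a Mh := by
    rw [List.cons_append, List.cons_append, List.isChain_cons_cons] at hch
    exact hch.1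
  have hAdjMlb : R.Adj Ml b := by
    obtain ⟨-, hj⟩ := chain_split' hch
    apply hj
    rw [show (a :: Mh :: Mt).getLast? = (Mh :: Mt).getLast? from List.getLast?_cons_cons]
    rw [List.getLast?_eq_getLast (l := Mh :: Mt) (by simp)]
    rfl
  by_cases hxh : x = Mh
  · refine ⟨[Mh, Ml], by simp [hMhMl], by simp, by simp, ?_, ?_⟩
    · intro v hv; rcases List.mem_cons.mp hv with h | h
      · exact Or.inl (h ▸ hMhM)
      · simp at h; exact Or.inl (h ▸ hMlM)
    · show List.IsChain R.Adj [a, Mh, Ml, b]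
      refine List.isChain_cons_cons.mpr ⟨hAdjaMh, List.isChain_cons_cons.mpr ⟨?_,
        List.isChain_cons_cons.mpr ⟨hAdjMlb, List.isChain_singleton _⟩⟩⟩
      exact hxh ▸ (hxadj Ml (hM Ml hMlM) (fun h => hMhMl (hxh ▸ h.symm))).symm
  · by_cases hxl : x = Ml
    · refine ⟨[Mh, Ml], by simp [hMhMl], by simp, by simp, ?_, ?_⟩
      · intro v hv; rcases List.mem_cons.mp hv with h | h
        · exact Or.inl (h ▸ hMhM)
        · simp at h; exact Or.inl (h ▸ hMlM)
      · show List.IsChain R.Adj [a, Mh, Ml, b]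
        refine List.isChain_cons_cons.mpr ⟨hAdjaMh, List.isChain_cons_cons.mpr ⟨?_,
          List.isChain_cons_cons.mpr ⟨hAdjMlb, List.isChain_singleton _⟩⟩⟩
        exact hxl ▸ hxadj Mh (hM Mh hMhM) (fun h => hMhMl (hxl ▸ h))
    · refine ⟨[Mh, x, Ml], ?_, by simp, by simp, ?_, ?_⟩
      · simp only [List.nodup_cons, List.mem_cons, List.mem_singleton, List.not_mem_nil,
          or_false, not_or, List.nodup_nil, and_true]
        exact ⟨⟨fun h => hxh h.symm, hMhMl⟩, fun h => hxl h, not_false⟩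
      · intro v hv
        rcases List.mem_cons.mp hv with h | h
        · exact Or.inl (h ▸ hMhM)
        · rcases List.mem_cons.mp h with h | h
          · exact Or.inr h
          · simp at h; exact Or.inl (h ▸ hMlM)
      · show List.IsChain R.Adj [a, Mh, x, Ml, b]
        refine List.isChain_cons_cons.mpr ⟨hAdjaMh, List.isChain_cons_cons.mpr ⟨?_,
          List.isChain_cons_cons.mpr ⟨?_, List.isChain_cons_cons.mpr ⟨hAdjMlb, List.isChain_singleton _⟩⟩⟩⟩
        · exact hxadj Mh (hM Mh hMhM) (fun h => hxh h.symm)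
        · exact (hxadj Ml (hM Ml hMlM) (fun h => hxl h.symm)).symm

lemma prefix_master {k N : ℕ} (hk : 6 ≤ k) {R : SimpleGraph (Fin N)}
    (hred : ¬ HasNCycle R (2 * k + 1))
    {W₁ W₃ X₁ : Finset (Fin N)} (hd13 : Disjoint W₁ W₃)
    (hh1 : IsHedgehog R W₁ X₁) (hc1 : k + 1 ≤ X₁.card)
    {x a₁ a₂ b₂ : Fin N} {M₂ : List (Fin N)} {F : List (Fin N)}
    (ha₁ : a₁ ∈ W₁) (ha₂ : a₂ ∈ W₁) (hnea : a₁ ≠ a₂)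
    (hch₂ : List.IsChain R.Adj (a₂ :: M₂ ++ [b₂]))
    (hM₂nd : M₂.Nodup) (hM₂ : ∀ v ∈ M₂, v ∈ W₃)
    (hnM₂x : ∀ v ∈ M₂, v ≠ x)
    (hxadj : ∀ v ∈ W₃, v ≠ x → R.Adj v x)
    (hFnd : F.Nodup) (hFW : ∀ v ∈ F, v ∈ W₃)
    (hFdisjM₂ : ∀ v ∈ F, v ∉ M₂)
    (hF1 : 1 ≤ F.length) (hF2 : F.length ≤ 2)
    (hchF : List.IsChain R.Adj (a₁ :: F))
    (hgl : (a₁ :: F).getLast? = some x)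
    (hi : k - F.length ≤ M₂.length) : False := by
  set i := k - F.length with hi_def
  have hi1 : 1 ≤ i := by omega
  set D := M₂.take i with hD_def
  have hDlen : D.length = i := by
    rw [hD_def, List.length_take]
    omega
  have hD0 : D ≠ [] := by
    intro h; rw [h] at hDlen; simp at hDlen; omega
  have hDsub : ∀ v ∈ D, v ∈ M₂ := fun v hv => List.mem_of_mem_take hv
  have hDr0 : D.reverse ≠ [] := by simpa using hD0
  obtain ⟨d, E, hDr⟩ := List.exists_cons_of_ne_nil hDr0
  have hdM₂ : d ∈ M₂ := hDsub d (by rw [← List.mem_reverse, hDr]; simp)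
  -- chain on a₂ :: D
  have c0 : List.IsChain R.Adj (a₂ :: M₂) :=
    (List.isChain_append.mp (by simpa using hch₂)).1
  have hchD : List.IsChain R.Adj (a₂ :: D) := by
    apply c0.prefix
    exact ⟨M₂.drop i, by simp [hD_def]⟩
  have hchDr : List.IsChain R.Adj (D.reverse ++ [a₂]) := by
    have := chain'_adj_rev hchD
    rwa [show (a₂ :: D).reverse = D.reverse ++ [a₂] by simp] at this
  set A := F ++ D.reverse with hA_def
  have hch : List.IsChain R.Adj (a₁ :: A ++ [a₂]) := by
    have hEq : a₁ :: A ++ [a₂] = (a₁ :: F) ++ (D.reverse ++ [a₂]) := by simp [hA_def]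
    rw [hEq]
    apply List.isChain_append.mpr
    refine ⟨hchF, hchDr, ?_⟩
    intro z hz y hy
    rw [hgl] at hz
    simp only [Option.mem_def, Option.some.injEq] at hz
    subst hz
    rw [hDr] at hy
    simp only [List.cons_append, List.head?_cons, Option.mem_def, Option.some.injEq] at hy
    subst hy
    exact (hxadj d (hM₂ d hdM₂) (hnM₂x d hdM₂)).symm
  have hAnd : A.Nodup := by
    rw [hA_def, List.nodup_append]
    refine ⟨hFnd, List.nodup_reverse.mpr (hM₂nd.sublist (List.take_sublist _ _)), ?_⟩
    intro v hvF _ hvD rfl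
    exact hFdisjM₂ v hvF (hDsub v (List.mem_reverse.mp hvD))
  have hAW : ∀ v ∈ A, v ∉ W₁ := by
    intro v hv
    have hd := Finset.disjoint_left.mp hd13
    rcases List.mem_append.mp hv with h | h
    · exact fun hw => hd hw (hFW v h)
    · exact fun hw => hd hw (hM₂ v (hDsub v (List.mem_reverse.mp h)))
  have hAlen : A.length = k := by
    rw [hA_def, List.length_append, List.length_reverse, hDlen]
    omega
  exact master hk hred hh1 hc1 ha₁ ha₂ hnea hAnd hAW (by omega) (by omega) hch

lemma core {k N : ℕ} (hk : 6 ≤ k) {R : SimpleGraph (Fin N)}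
    (hred : ¬ HasNCycle R (2 * k + 1))
    {W₁ W₂ W₃ X₁ X₂ : Finset (Fin N)}
    (hd12 : Disjoint W₁ W₂) (hd13 : Disjoint W₁ W₃) (hd23 : Disjoint W₂ W₃)
    (hh1 : IsHedgehog R W₁ X₁) (hc1 : k + 1 ≤ X₁.card)
    (hh2 : IsHedgehog R W₂ X₂) (hc2 : k ≤ X₂.card)
    {x : Fin N} (hx3 : x ∈ W₃) (hxadj : ∀ v ∈ W₃, v ≠ x → R.Adj v x)
    {a₁ b₁ a₂ b₂ : Fin N} {M₁ M₂ : List (Fin N)}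
    (ha₁ : a₁ ∈ W₁) (ha₂ : a₂ ∈ W₁) (hb₁ : b₁ ∈ W₂) (hb₂ : b₂ ∈ W₂)
    (hP₁nd : (a₁ :: M₁ ++ [b₁]).Nodup) (hP₂nd : (a₂ :: M₂ ++ [b₂]).Nodup)
    (hch₁ : List.IsChain R.Adj (a₁ :: M₁ ++ [b₁]))
    (hch₂ : List.IsChain R.Adj (a₂ :: M₂ ++ [b₂]))
    (hM₁ : ∀ v ∈ M₁, v ∈ W₃) (hM₂ : ∀ v ∈ M₂, v ∈ W₃)
    (hPdisj : ∀ v ∈ a₁ :: M₁ ++ [b₁], v ∉ a₂ :: M₂ ++ [b₂])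
    (hx2 : x ∉ a₂ :: M₂ ++ [b₂]) : False := by
  have hmem1 : ∀ v, v ∈ a₁ :: M₁ ++ [b₁] ↔ (v = a₁ ∨ v ∈ M₁ ∨ v = b₁) := by
    intro v; simp [or_assoc]
  have hmem2 : ∀ v, v ∈ a₂ :: M₂ ++ [b₂] ↔ (v = a₂ ∨ v ∈ M₂ ∨ v = b₂) := by
    intro v; simp [or_assoc]
  have hnea : a₁ ≠ a₂ := by
    intro h
    exact hPdisj a₁ ((hmem1 a₁).mpr (Or.inl rfl)) ((hmem2 a₁).mpr (Or.inl h))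
  have hneb : b₁ ≠ b₂ := by
    intro h
    exact hPdisj b₁ ((hmem1 b₁).mpr (Or.inr (Or.inr rfl))) ((hmem2 b₁).mpr (Or.inr (Or.inr h)))
  have hnM₂x : ∀ v ∈ M₂, v ≠ x := by
    intro v hv h
    exact hx2 ((hmem2 x).mpr (Or.inr (Or.inl (h ▸ hv))))
  obtain ⟨hM₁nd, ha₁M₁, hb₁M₁, hab₁⟩ := nodup_parts hP₁nd
  obtain ⟨hM₂nd, ha₂M₂, hb₂M₂, hab₂⟩ := nodup_parts hP₂nd
  have hM₁W : ∀ v ∈ M₁, v ∉ W₁ ∧ v ∉ W₂ := by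
    intro v hv
    exact ⟨fun h => Finset.disjoint_left.mp hd13 h (hM₁ v hv),
           fun h => Finset.disjoint_left.mp hd23 h (hM₁ v hv)⟩
  have hM₂W : ∀ v ∈ M₂, v ∉ W₁ ∧ v ∉ W₂ := by
    intro v hv
    exact ⟨fun h => Finset.disjoint_left.mp hd13 h (hM₂ v hv),
           fun h => Finset.disjoint_left.mp hd23 h (hM₂ v hv)⟩
  have hxW : x ∉ W₁ ∧ x ∉ W₂ :=
    ⟨fun h => Finset.disjoint_left.mp hd13 h hx3, fun h => Finset.disjoint_left.mp hd23 h hx3⟩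
  have hM₁M₂ : ∀ v ∈ M₁, v ∉ M₂ := by
    intro v hv h
    exact hPdisj v ((hmem1 v).mpr (Or.inr (Or.inl hv))) ((hmem2 v).mpr (Or.inr (Or.inl h)))
  have hch₂r : List.IsChain R.Adj (b₂ :: M₂.reverse ++ [a₂]) := by
    have := chain'_adj_rev hch₂
    rwa [show (a₂ :: M₂ ++ [b₂]).reverse = b₂ :: M₂.reverse ++ [a₂] by simp] at this
  rcases le_or_gt (M₁.length + M₂.length) (2 * k - 5) with hsig | hsig
  · -- Case A : both internal lists short, use them fully
    apply bridge hk hred hd12 hh1 hc1 hh2 hc2 ha₁ ha₂ hb₁ hb₂ hnea hneb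
      hM₁nd (List.nodup_reverse.mpr hM₂nd)
      (fun v hv h => hM₁M₂ v hv (List.mem_reverse.mp h))
      ?_ (by simp; omega) hch₁ hch₂r
    intro v hv
    rcases List.mem_append.mp hv with h | h
    · exact hM₁W v h
    · exact hM₂W v (List.mem_reverse.mp h)
  · rcases le_or_gt M₂.length (2 * k - 8) with hm₂ | hm₂
    · -- Case B : p₂ short, shorten p₁ via x
      have hm₁2 : 2 ≤ M₁.length := by omega
      obtain ⟨I, hInd, hIl2, hIl3, hImem, hIch⟩ :=
        shortcut hx3 hxadj hM₁ hP₁nd hch₁ hm₁2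
      apply bridge hk hred hd12 hh1 hc1 hh2 hc2 ha₁ ha₂ hb₁ hb₂ hnea hneb
        hInd (List.nodup_reverse.mpr hM₂nd) ?_ ?_ ?_ hIch hch₂r
      · intro v hv h
        rcases hImem v hv with h' | h'
        · exact hM₁M₂ v h' (List.mem_reverse.mp h)
        · exact hnM₂x v (List.mem_reverse.mp h) h'
      · intro v hv
        rcases List.mem_append.mp hv with h | h
        · rcases hImem v h with h' | h'
          · exact hM₁W v h'
          · exact h' ▸ hxW
        · exact hM₂W v (List.mem_reverse.mp h)
      · simp only [List.length_reverse]
        omega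
    · -- Case C : m₂ ≥ 2k-7
      by_cases hxP1 : x ∈ M₁
      · -- x is internal to p₁
        have hM₁0 : M₁ ≠ [] := fun h => by rw [h] at hxP1; simp at hxP1
        obtain ⟨Mh₁, Mt₁, hht⟩ := List.exists_cons_of_ne_nil hM₁0
        have hMh₁M₁ : Mh₁ ∈ M₁ := by rw [hht]; simp
        have hAdja₁Mh₁ : R.Adj a₁ Mh₁ := by
          have hc := hch₁
          rw [hht, List.cons_append, List.cons_append, List.isChain_cons_cons] at hc
          exact hc.1
        by_cases hxh : Mh₁ = x
        · -- F = [x]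
          apply prefix_master hk hred hd13 hh1 hc1 ha₁ ha₂ hnea hch₂ hM₂nd hM₂ hnM₂x hxadj
            (F := [x]) (by simp) (by simpa using hx3) ?_ (by simp) (by simp) ?_ (by simp) ?_
          · intro v hv
            simp only [List.mem_singleton] at hv
            subst hv
            exact fun h => hnM₂x v h rfl
          · show List.IsChain R.Adj [a₁, x]
            exact List.isChain_pair.mpr (hxh ▸ hAdja₁Mh₁)
          · simp only [List.length_singleton]
            omega
        · -- F = [Mh₁, x]
          apply prefix_master hk hred hd13 hh1 hc1 ha₁ ha₂ hnea hch₂ hM₂nd hM₂ hnM₂x hxadj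
            (F := [Mh₁, x]) (by simp [hxh]) ?_ ?_ (by simp) (by simp) ?_ (by simp) ?_
          · intro v hv
            rcases List.mem_cons.mp hv with h | h
            · exact h ▸ hM₁ Mh₁ hMh₁M₁
            · simp only [List.mem_singleton] at h; exact h ▸ hx3
          · intro v hv
            rcases List.mem_cons.mp hv with h | h
            · exact h ▸ hM₁M₂ Mh₁ hMh₁M₁
            · simp only [List.mem_singleton] at h
              subst h
              exact fun hc => hnM₂x v hc rfl
          · show List.IsChain R.Adj [a₁, Mh₁, x]
            exact List.isChain_cons_cons.mpr ⟨hAdja₁Mh₁,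
              List.isChain_pair.mpr (hxadj Mh₁ (hM₁ Mh₁ hMh₁M₁) hxh)⟩
          · simp only [List.length_cons, List.length_singleton]
            omega
      · -- x not on p₁
        rcases le_or_gt M₁.length (2 * k - 8) with hm₁ | hm₁
        · -- shorten p₂ via x, keep M₁
          have hm₂2 : 2 ≤ M₂.length := by omega
          obtain ⟨I, hInd, hIl2, hIl3, hImem, hIch⟩ :=
            shortcut hx3 hxadj hM₂ hP₂nd hch₂ hm₂2
          have hIchr : List.IsChain R.Adj (b₂ :: I.reverse ++ [a₂]) := by
            have := chain'_adj_rev hIch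
            rwa [show (a₂ :: I ++ [b₂]).reverse = b₂ :: I.reverse ++ [a₂] by simp] at this
          apply bridge hk hred hd12 hh1 hc1 hh2 hc2 ha₁ ha₂ hb₁ hb₂ hnea hneb
            hM₁nd (List.nodup_reverse.mpr hInd) ?_ ?_ ?_ hch₁ hIchr
          · intro v hv h
            rcases hImem v (List.mem_reverse.mp h) with h' | h'
            · exact hM₁M₂ v hv h'
            · exact hxP1 (h' ▸ hv)
          · intro v hv
            rcases List.mem_append.mp hv with h | h
            · exact hM₁W v h
            · rcases hImem v (List.mem_reverse.mp h) with h' | h'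
              · exact hM₂W v h'
              · exact h' ▸ hxW
          · simp only [List.length_reverse]
            omega
        · -- both long : prefix construction with F = [Mh₁, x]
          have hM₁0 : M₁ ≠ [] := by
            intro h; rw [h] at hm₁; simp at hm₁
          obtain ⟨Mh₁, Mt₁, hht⟩ := List.exists_cons_of_ne_nil hM₁0
          have hMh₁M₁ : Mh₁ ∈ M₁ := by rw [hht]; simp
          have hAdja₁Mh₁ : R.Adj a₁ Mh₁ := by
            have hc := hch₁
            rw [hht, List.cons_append, List.cons_append, List.isChain_cons_cons] at hc
            exact hc.1
          have hxh : Mh₁ ≠ x := fun h => hxP1 (h ▸ hMh₁M₁)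
          apply prefix_master hk hred hd13 hh1 hc1 ha₁ ha₂ hnea hch₂ hM₂nd hM₂ hnM₂x hxadj
            (F := [Mh₁, x]) (by simp [hxh]) ?_ ?_ (by simp) (by simp) ?_ (by simp) ?_
          · intro v hv
            rcases List.mem_cons.mp hv with h | h
            · exact h ▸ hM₁ Mh₁ hMh₁M₁
            · simp only [List.mem_singleton] at h; exact h ▸ hx3
          · intro v hv
            rcases List.mem_cons.mp hv with h | h
            · exact h ▸ hM₁M₂ Mh₁ hMh₁M₁
            · simp only [List.mem_singleton] at h
              subst h
              exact fun hc => hnM₂x v hc rfl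
          · show List.IsChain R.Adj [a₁, Mh₁, x]
            exact List.isChain_cons_cons.mpr ⟨hAdja₁Mh₁,
              List.isChain_pair.mpr (hxadj Mh₁ (hM₁ Mh₁ hMh₁M₁) hxh)⟩
          · simp only [List.length_cons, List.length_singleton]
            omega

lemma walk_decomp {N : ℕ} {R : SimpleGraph (Fin N)} {a b : Fin N} (p : R.Walk a b)
    (hab : a ≠ b) : ∃ M : List (Fin N), p.support = a :: M ++ [b] := by
  have hrev := p.reverse.support_eq_cons
  rw [SimpleGraph.Walk.support_reverse] at hrev
  have h0 : p.support = (p.reverse.support.tail).reverse ++ [b] := by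
    have h := congrArg List.reverse hrev
    simpa using h
  cases hT : (p.reverse.support.tail).reverse with
  | nil =>
      rw [hT] at h0
      rw [p.support_eq_cons] at h0
      simp only [List.nil_append, List.cons.injEq] at h0
      exact absurd h0.1 hab
  | cons c M =>
      rw [hT] at h0
      have hc : c = a := by
        have h2 := p.support_eq_cons
        rw [h0] at h2
        simp only [List.cons_append, List.cons.injEq] at h2
        exact h2.1
      exact ⟨M, by rw [h0, hc]⟩

end Aux

theorem stmt9 (k N : ℕ) (hk : 6 ≤ k)
    (R : SimpleGraph (Fin N))
    (hred : ¬ HasNCycle R (2 * k + 1))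
    (W₁ W₂ W₃ X₁ X₂ X₃ : Finset (Fin N))
    (hd12 : Disjoint W₁ W₂) (hd13 : Disjoint W₁ W₃) (hd23 : Disjoint W₂ W₃)
    (hcover : W₁ ∪ W₂ ∪ W₃ = Finset.univ)
    (hh1 : IsHedgehog R W₁ X₁) (hh2 : IsHedgehog R W₂ X₂) (hh3 : IsHedgehog R W₃ X₃)
    (hc1 : k + 1 ≤ X₁.card) (hc2 : k ≤ X₂.card) (hc3 : 1 ≤ X₃.card) :
    ¬ ∃ (a₁ b₁ a₂ b₂ : Fin N) (p₁ : R.Walk a₁ b₁) (p₂ : R.Walk a₂ b₂),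
      p₁.IsPath ∧ p₂.IsPath ∧
      a₁ ∈ W₁ ∧ b₁ ∈ W₂ ∧ a₂ ∈ W₁ ∧ b₂ ∈ W₂ ∧
      (∀ x ∈ p₁.support, x ≠ a₁ → x ≠ b₁ → x ∉ W₁ ∪ W₂) ∧
      (∀ x ∈ p₂.support, x ≠ a₂ → x ≠ b₂ → x ∉ W₁ ∪ W₂) ∧
      (∀ x ∈ p₁.support, x ∉ p₂.support) := by
  rintro ⟨a₁, b₁, a₂, b₂, p₁, p₂, hp₁, hp₂, ha₁, hb₁, ha₂, hb₂, hint₁, hint₂, hdisj⟩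
  have hW3 : ∀ v : Fin N, v ∉ W₁ → v ∉ W₂ → v ∈ W₃ := by
    intro v h1 h2
    have hv : v ∈ W₁ ∪ W₂ ∪ W₃ := by rw [hcover]; exact Finset.mem_univ v
    simp only [Finset.mem_union] at hv
    tauto
  have hab₁ : a₁ ≠ b₁ := by
    intro h
    exact Finset.disjoint_left.mp hd12 ha₁ (h ▸ hb₁)
  have hab₂ : a₂ ≠ b₂ := by
    intro h
    exact Finset.disjoint_left.mp hd12 ha₂ (h ▸ hb₂)
  obtain ⟨M₁, hs₁⟩ := walk_decomp p₁ hab₁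
  obtain ⟨M₂, hs₂⟩ := walk_decomp p₂ hab₂
  have hP₁nd : (a₁ :: M₁ ++ [b₁]).Nodup := hs₁ ▸ (p₁.isPath_def.mp hp₁)
  have hP₂nd : (a₂ :: M₂ ++ [b₂]).Nodup := hs₂ ▸ (p₂.isPath_def.mp hp₂)
  have hch₁ : List.IsChain R.Adj (a₁ :: M₁ ++ [b₁]) := hs₁ ▸ p₁.isChain_adj_support
  have hch₂ : List.IsChain R.Adj (a₂ :: M₂ ++ [b₂]) := hs₂ ▸ p₂.isChain_adj_support
  have hM₁ : ∀ v ∈ M₁, v ∈ W₃ := by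
    intro v hv
    obtain ⟨-, ha, hb, -⟩ := nodup_parts hP₁nd
    have hmem : v ∈ p₁.support := by rw [hs₁]; simp [hv]
    have := hint₁ v hmem (fun h => ha (h ▸ hv)) (fun h => hb (h ▸ hv))
    rw [Finset.mem_union] at this
    push_neg at this
    exact hW3 v this.1 this.2
  have hM₂ : ∀ v ∈ M₂, v ∈ W₃ := by
    intro v hv
    obtain ⟨-, ha, hb, -⟩ := nodup_parts hP₂nd
    have hmem : v ∈ p₂.support := by rw [hs₂]; simp [hv]
    have := hint₂ v hmem (fun h => ha (h ▸ hv)) (fun h => hb (h ▸ hv))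
    rw [Finset.mem_union] at this
    push_neg at this
    exact hW3 v this.1 this.2
  have hPdisj : ∀ v ∈ a₁ :: M₁ ++ [b₁], v ∉ a₂ :: M₂ ++ [b₂] := by
    intro v hv
    rw [← hs₁] at hv
    rw [← hs₂]
    exact hdisj v hv
  obtain ⟨x, hxX₃⟩ := Finset.card_pos.mp (by omega : 0 < X₃.card)
  have hx3 : x ∈ W₃ := hh3.1 hxX₃
  have hxadj : ∀ v ∈ W₃, v ≠ x → R.Adj v x := fun v hv hne => hh_adj hh3 hv hxX₃ hne
  by_cases hxp2 : x ∈ p₂.support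
  · have hx1 : x ∉ a₁ :: M₁ ++ [b₁] := by
      rw [← hs₁]
      exact fun h => hdisj x h hxp2
    exact core hk hred hd12 hd13 hd23 hh1 hc1 hh2 hc2 hx3 hxadj ha₂ ha₁ hb₂ hb₁
      hP₂nd hP₁nd hch₂ hch₁ hM₂ hM₁
      (fun v hv h => hPdisj v h hv) hx1
  · have hx2 : x ∉ a₂ :: M₂ ++ [b₂] := by rw [← hs₂]; exact hxp2
    exact core hk hred hd12 hd13 hd23 hh1 hc1 hh2 hc2 hx3 hxadj ha₁ ha₂ hb₁ hb₂
      hP₁nd hP₂nd hch₁ hch₂ hM₁ hM₂ hPdisj hx2
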